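/- For any atlas 𝒜 in ℝ^N and any Ω₁, Ω₂ ∈ C(𝒜), the chain of inequalities d_{HP}(∂Ω₁, ∂Ω₂) ≤ d^{HP}(∂Ω₁, ∂Ω₂) ≤ d_𝒜(Ω₁, Ω₂) holds, where d_{HP} is the lower Hausdorff–Pompeiu deviation, d^{HP} is the Hausdorff–Pompeiu distance, and d_𝒜 is the atlas distance. -/

import Mathlib

open Metric Set

/-- An atlas in `ℝ^{n+1}`: rotations `r_j` and cuboids `r_j(V_j) = Π_i (a_{ij}, b_{ij})`. -/
structure Atlas (n : ℕ) where
  s : ℕ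
  s' : ℕ
  hs' : s' ≤ s
  ρ : ℝ
  ρpos : 0 < ρ
  r : Fin s → (EuclideanSpace ℝ (Fin (n+1)) ≃ₗᵢ[ℝ] EuclideanSpace ℝ (Fin (n+1)))
  a : Fin s → Fin (n+1) → ℝ
  b : Fin s → Fin (n+1) → ℝ
  hab : ∀ j i, a j i < b j i

namespace Atlas

variable {n : ℕ} (A : Atlas n)

/-- The cuboid `V_j` (in the original coordinates). -/
def V (j : Fin A.s) : Set (EuclideanSpace ℝ (Fin (n+1))) :=
  (A.r j) ⁻¹' {x | ∀ i, A.a j i < x i ∧ x i < A.b j i}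

/-- The base cuboid `W_j ⊂ ℝ^n`. -/
def W (j : Fin A.s) : Set (EuclideanSpace ℝ (Fin n)) :=
  {x | ∀ i : Fin n, A.a j i.castSucc < x i ∧ x i < A.b j i.castSucc}

/-- First `n` coordinates of a point of `ℝ^{n+1}`. -/
noncomputable def bar {n : ℕ} (x : EuclideanSpace ℝ (Fin (n+1))) : EuclideanSpace ℝ (Fin n) :=
  (EuclideanSpace.equiv (Fin n) ℝ).symm (fun i => x i.castSucc)

/-- `Ω ∈ C(𝒜)` with local boundary functions `g`: `Ω` is open and nonempty, covered by
the sets `(V_j)_ρ`, in each chart `r_j(Ω ∩ V_j)` is the subgraph of the continuous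
function `g j`, `V_j` meets `∂Ω` exactly for `j < s'`, and `a_{Nj}+ρ ≤ g_j ≤ b_{Nj}−ρ`
there (while `g_j = b_{Nj}` for `j ≥ s'`). -/
def IsRep (Ω : Set (EuclideanSpace ℝ (Fin (n+1)))) (g : Fin A.s → EuclideanSpace ℝ (Fin n) → ℝ) : Prop :=
  IsOpen Ω ∧ Ω.Nonempty ∧ Bornology.IsBounded Ω ∧
  (∀ j, ContinuousOn (g j) (closure (A.W j))) ∧
  (Ω ⊆ ⋃ j, {x ∈ A.V j | A.ρ < infDist x (frontier (A.V j))}) ∧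
  (∀ j, (A.r j) '' (Ω ∩ A.V j) =
    {x | bar x ∈ A.W j ∧ A.a j (Fin.last n) < x (Fin.last n) ∧
      x (Fin.last n) < g j (bar x)}) ∧
  (∀ j : Fin A.s, (j : ℕ) < A.s' ↔ (A.V j ∩ frontier Ω).Nonempty) ∧
  (∀ j : Fin A.s, (j : ℕ) < A.s' → ∀ x ∈ closure (A.W j),
    A.a j (Fin.last n) + A.ρ ≤ g j x ∧ g j x ≤ A.b j (Fin.last n) - A.ρ) ∧
  (∀ j : Fin A.s, A.s' ≤ (j : ℕ) → ∀ x ∈ closure (A.W j), g j x = A.b j (Fin.last n))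

/-- The atlas distance: maximum over charts of the sup-norm difference of the
local boundary functions. -/
noncomputable def adist (g₁ g₂ : Fin A.s → EuclideanSpace ℝ (Fin n) → ℝ) : ℝ :=
  ⨆ j : Fin A.s, ⨆ x : closure (A.W j), |g₁ j x - g₂ j x|

end Atlas

open Atlas
section Aux

open Metric Set Atlas

variable {n : ℕ}

lemma euclid_dist_update {m : ℕ} (y : EuclideanSpace ℝ (Fin m)) (i : Fin m) (c : ℝ) :
    dist y (WithLp.toLp 2 (Function.update y.ofLp i c)) = |y i - c| := by
  rw [EuclideanSpace.dist_eq]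
  rw [Finset.sum_eq_single i]
  · simp only [WithLp.ofLp_toLp, Function.update_self]; rw [Real.sqrt_sq_eq_abs, Real.dist_eq, abs_abs]
  · intro j _ hj
    simp only [WithLp.ofLp_toLp, Function.update_of_ne hj]
    simp
  · simp

lemma bar_apply (x : EuclideanSpace ℝ (Fin (n+1))) (i : Fin n) :
    bar x i = x i.castSucc := rfl

lemma continuous_bar : Continuous (bar (n := n)) := by
  unfold bar
  refine Continuous.comp ?_ ?_
  · exact (EuclideanSpace.equiv (Fin n) ℝ).symm.continuous
  · exact continuous_pi fun i => PiLp.continuous_apply 2 _ _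

lemma bar_update_last (y : EuclideanSpace ℝ (Fin (n+1))) (c : ℝ) :
    bar (WithLp.toLp 2 (Function.update y.ofLp (Fin.last n) c)) = bar y := by
  unfold bar; congr 1; funext i
  show Function.update y.ofLp (Fin.last n) c i.castSucc = y i.castSucc
  exact Function.update_of_ne (Fin.castSucc_lt_last i).ne c y

lemma adist_nonneg (A : Atlas n) (g₁ g₂ : Fin A.s → EuclideanSpace ℝ (Fin n) → ℝ) :
    0 ≤ A.adist g₁ g₂ :=
  Real.iSup_nonneg fun _ => Real.iSup_nonneg fun _ => abs_nonneg _

lemma adist_comm (A : Atlas n) (g₁ g₂ : Fin A.s → EuclideanSpace ℝ (Fin n) → ℝ) :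
    A.adist g₁ g₂ = A.adist g₂ g₁ := by
  unfold Atlas.adist
  simp only [abs_sub_comm]

lemma isCompact_closure_W (A : Atlas n) (j : Fin A.s) : IsCompact (closure (A.W j)) := by
  set e := (EuclideanSpace.equiv (Fin n) ℝ).toHomeomorph with he
  set K : Set (EuclideanSpace ℝ (Fin n)) :=
    e ⁻¹' (Set.univ.pi fun i => Set.Icc (A.a j i.castSucc) (A.b j i.castSucc)) with hK
  have hKc : IsCompact K := e.isCompact_preimage.mpr (isCompact_univ_pi fun i => isCompact_Icc)
  refine hKc.of_isClosed_subset isClosed_closure (closure_minimal ?_ hKc.isClosed)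
  intro x hx
  simp only [hK, Set.mem_preimage, Set.mem_pi, Set.mem_univ, forall_true_left, Set.mem_Icc]
  intro i
  exact ⟨(hx i).1.le, (hx i).2.le⟩

lemma le_adist (A : Atlas n) (g₁ g₂ : Fin A.s → EuclideanSpace ℝ (Fin n) → ℝ)
    (hg₁ : ∀ j, ContinuousOn (g₁ j) (closure (A.W j)))
    (hg₂ : ∀ j, ContinuousOn (g₂ j) (closure (A.W j)))
    (j : Fin A.s) {x : EuclideanSpace ℝ (Fin n)} (hx : x ∈ closure (A.W j)) :
    |g₁ j x - g₂ j x| ≤ A.adist g₁ g₂ := by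
  have hbdd : BddAbove (Set.range fun y : closure (A.W j) => |g₁ j y - g₂ j y|) := by
    have : (fun y => |g₁ j y - g₂ j y|) '' closure (A.W j) =
        Set.range fun y : closure (A.W j) => |g₁ j y - g₂ j y| := by
      exact Set.image_eq_range _ _
    rw [← this]
    exact ((isCompact_closure_W A j).bddAbove_image (((hg₁ j).sub (hg₂ j)).abs))
  have h1 : |g₁ j x - g₂ j x| ≤ ⨆ y : closure (A.W j), |g₁ j y - g₂ j y| :=
    le_ciSup hbdd ⟨x, hx⟩
  refine h1.trans ?_
  unfold Atlas.adist
  exact le_ciSup (f := fun j : Fin A.s => ⨆ y : closure (A.W j), |g₁ j y - g₂ j y|)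
    (Set.finite_range _).bddAbove j

end Aux
lemma isOpen_cuboid {m : ℕ} (a b : Fin m → ℝ) :
    IsOpen {z : EuclideanSpace ℝ (Fin m) | ∀ i, a i < z i ∧ z i < b i} := by
  have : {z : EuclideanSpace ℝ (Fin m) | ∀ i, a i < z i ∧ z i < b i} =
      ⋂ i, ((fun z : EuclideanSpace ℝ (Fin m) => z i) ⁻¹' Set.Ioo (a i) (b i)) := by
    ext z; simp [Set.mem_Ioo, Set.mem_iInter]
  rw [this]
  exact isOpen_iInter_of_finite fun i => isOpen_Ioo.preimage (PiLp.continuous_apply 2 _ i)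
section Key

open Metric Set Atlas

lemma cuboid_margin {m : ℕ} {a b : Fin m → ℝ} (hab : ∀ i, a i < b i) {ρ : ℝ} (hρ : 0 < ρ)
    {y : EuclideanSpace ℝ (Fin m)} (hy : ∀ i, a i < y i ∧ y i < b i)
    (hd : ∀ p ∈ frontier {z : EuclideanSpace ℝ (Fin m) | ∀ i, a i < z i ∧ z i < b i},
      ρ ≤ dist y p) (i : Fin m) :
    a i + ρ ≤ y i ∧ y i ≤ b i - ρ := by
  set Q : Set (EuclideanSpace ℝ (Fin m)) := {z | ∀ i, a i < z i ∧ z i < b i} with hQdef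
  have key : ∀ c : ℝ, ¬ (a i < c ∧ c < b i) →
      (∀ ε > 0, ∃ c' : ℝ, (a i < c' ∧ c' < b i) ∧ |c - c'| < ε) →
      ρ ≤ |y i - c| := by
    intro c hcnot happrox
    have hfr : WithLp.toLp 2 (Function.update y.ofLp i c) ∈ frontier Q := by
      constructor
      · rw [Metric.mem_closure_iff]
        intro ε hε
        obtain ⟨c', hc', hnear⟩ := happrox ε hε
        refine ⟨WithLp.toLp 2 (Function.update y.ofLp i c'), fun k => ?_, ?_⟩
        · rcases eq_or_ne k i with rfl | hk
          · rw [PiLp.toLp_apply, Function.update_self]; exact hc'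
          · rw [PiLp.toLp_apply, Function.update_of_ne hk]; exact hy k
        · have heq : WithLp.toLp 2 (Function.update y.ofLp i c') = WithLp.toLp 2 (Function.update (WithLp.toLp 2 (Function.update y.ofLp i c)).ofLp i c') := by
            simp
          rw [heq, euclid_dist_update, PiLp.toLp_apply, Function.update_self]
          exact hnear
      · have hQo : IsOpen Q := hQdef ▸ isOpen_cuboid a b
        rw [hQo.interior_eq]
        intro hmem
        have := hmem i
        rw [PiLp.toLp_apply, Function.update_self] at this
        exact hcnot this
    have := hd _ hfr
    rwa [euclid_dist_update] at this
  constructor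
  · have h := key (a i) (fun h => lt_irrefl _ h.1) ?_
    · rw [abs_of_pos (by linarith [(hy i).1])] at h; linarith
    · intro ε hε
      refine ⟨a i + min (ε/2) ((b i - a i)/2), ⟨?_, ?_⟩, ?_⟩
      · have := lt_min (half_pos hε) (by linarith [hab i] : (0:ℝ) < (b i - a i)/2)
        linarith
      · have h0 := hab i
        have := min_le_right (ε/2) ((b i - a i)/2); linarith
      · have h1 := lt_min (half_pos hε) (by linarith [hab i] : (0:ℝ) < (b i - a i)/2)
        have h2 := min_le_left (ε/2) ((b i - a i)/2)
        rw [abs_sub_comm, abs_of_pos (by linarith)]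
        linarith
  · have h := key (b i) (fun h => lt_irrefl _ h.2) ?_
    · rw [abs_of_neg (by linarith [(hy i).2])] at h; linarith
    · intro ε hε
      refine ⟨b i - min (ε/2) ((b i - a i)/2), ⟨?_, ?_⟩, ?_⟩
      · have h0 := hab i
        have := min_le_right (ε/2) ((b i - a i)/2); linarith
      · have := lt_min (half_pos hε) (by linarith [hab i] : (0:ℝ) < (b i - a i)/2)
        linarith
      · have h1 := lt_min (half_pos hε) (by linarith [hab i] : (0:ℝ) < (b i - a i)/2)
        have h2 := min_le_left (ε/2) ((b i - a i)/2)
        rw [abs_of_pos (by linarith)]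
        linarith

end Key
section Main

open Metric Set Atlas

lemma infDist_frontier_le {n : ℕ} (A : Atlas n) {Ω₁ Ω₂ : Set (EuclideanSpace ℝ (Fin (n+1)))}
    {g₁ g₂ : Fin A.s → EuclideanSpace ℝ (Fin n) → ℝ}
    (h₁ : A.IsRep Ω₁ g₁) (h₂ : A.IsRep Ω₂ g₂)
    {x : EuclideanSpace ℝ (Fin (n+1))} (hx : x ∈ frontier Ω₁) :
    infDist x (frontier Ω₂) ≤ A.adist g₁ g₂ := by
  obtain ⟨hΩ₁o, -, -, hg₁c, hcov, hrep₁, hs₁, -, -⟩ := h₁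
  obtain ⟨hΩ₂o, -, -, hg₂c, -, hrep₂, -, hb₂, -⟩ := h₂
  have hxc : x ∈ closure Ω₁ := hx.1
  -- find a chart containing x with margin ρ
  have hxU : x ∈ ⋃ j, closure {y ∈ A.V j | A.ρ < infDist y (frontier (A.V j))} := by
    have h' := closure_mono hcov hxc
    rwa [closure_iUnion_of_finite] at h'
  rw [Set.mem_iUnion] at hxU
  obtain ⟨j, hjx⟩ := hxU
  have hQopen : IsOpen {z : EuclideanSpace ℝ (Fin (n+1)) | ∀ i, A.a j i < z i ∧ z i < A.b j i} :=
    isOpen_cuboid _ _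
  have hVopen : IsOpen (A.V j) := hQopen.preimage (A.r j).continuous
  have hclosed : closure {y ∈ A.V j | A.ρ < infDist y (frontier (A.V j))} ⊆
      {y | A.ρ ≤ infDist y (frontier (A.V j))} ∩ closure (A.V j) := by
    refine closure_minimal (fun y hy => ⟨hy.2.le, subset_closure hy.1⟩)
      (IsClosed.inter ?_ isClosed_closure)
    exact isClosed_le continuous_const (continuous_infDist_pt _)
  have hρx : A.ρ ≤ infDist x (frontier (A.V j)) := (hclosed hjx).1
  have hxV : x ∈ A.V j := by
    by_contra hne
    have hfr : x ∈ frontier (A.V j) := ⟨(hclosed hjx).2, by rwa [hVopen.interior_eq]⟩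
    have h0 := infDist_zero_of_mem hfr
    have := A.ρpos
    linarith
  set y := A.r j x with hy
  have hyQ : ∀ i, A.a j i < y i ∧ y i < A.b j i := hxV
  -- frontier of V_j corresponds to frontier of the cuboid
  have hfrV : ∀ p ∈ frontier {z : EuclideanSpace ℝ (Fin (n+1)) | ∀ i, A.a j i < z i ∧ z i < A.b j i},
      A.ρ ≤ dist y p := by
    intro p hp
    have hp' : (A.r j).symm p ∈ frontier (A.V j) := by
      have : A.V j = (A.r j).toHomeomorph ⁻¹' {z | ∀ i, A.a j i < z i ∧ z i < A.b j i} := rfl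
      rw [this, ← (A.r j).toHomeomorph.preimage_frontier]
      show A.r j ((A.r j).symm p) ∈ frontier _
      rwa [(A.r j).apply_symm_apply]
    have hle : infDist x (frontier (A.V j)) ≤ dist x ((A.r j).symm p) :=
      infDist_le_dist_of_mem hp'
    have hdd : dist x ((A.r j).symm p) = dist y p := by
      rw [← (A.r j).dist_map, ← hy, (A.r j).apply_symm_apply]
    linarith [hρx]
  have hmargin : ∀ i, A.a j i + A.ρ ≤ y i ∧ y i ≤ A.b j i - A.ρ :=
    cuboid_margin (A.hab j) A.ρpos hyQ hfrV
  have hbarW : bar y ∈ A.W j := by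
    intro i
    have h1 := (hmargin i.castSucc).1
    have h2 := (hmargin i.castSucc).2
    have := A.ρpos
    exact ⟨by rw [bar_apply]; linarith, by rw [bar_apply]; linarith⟩
  have hbarWc : bar y ∈ closure (A.W j) := subset_closure hbarW
  -- y last ≤ g₁ (bar y)
  have hle : y (Fin.last n) ≤ g₁ j (bar y) := by
    have hxcl : x ∈ closure (Ω₁ ∩ A.V j) := by
      have hmem : x ∈ A.V j ∩ closure Ω₁ := ⟨hxV, hxc⟩
      have h' := hVopen.inter_closure hmem
      rwa [Set.inter_comm] at h'
    have hmapsto : Set.MapsTo (fun z => bar (A.r j z)) (Ω₁ ∩ A.V j) (A.W j) := by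
      intro z hz
      have hmem : A.r j z ∈ (A.r j) '' (Ω₁ ∩ A.V j) := ⟨z, hz, rfl⟩
      rw [hrep₁ j] at hmem
      exact hmem.1
    have hcontbar : Continuous fun z => bar (A.r j z) :=
      continuous_bar.comp (A.r j).continuous
    have hmapsto' := hmapsto.closure hcontbar
    have hψ : ContinuousOn (fun z => g₁ j (bar (A.r j z))) (closure (Ω₁ ∩ A.V j)) :=
      (hg₁c j).comp hcontbar.continuousOn hmapsto'
    have hφ : ContinuousOn (fun z => (A.r j z) (Fin.last n)) (closure (Ω₁ ∩ A.V j)) :=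
      ((PiLp.continuous_apply 2 _ (Fin.last n)).comp (A.r j).continuous).continuousOn
    have hps : ∀ z ∈ Ω₁ ∩ A.V j, (A.r j z) (Fin.last n) ≤ g₁ j (bar (A.r j z)) := by
      intro z hz
      have hmem : A.r j z ∈ (A.r j) '' (Ω₁ ∩ A.V j) := ⟨z, hz, rfl⟩
      rw [hrep₁ j] at hmem
      exact hmem.2.2.le
    have := le_on_closure hps hφ hψ hxcl
    rwa [← hy] at this
  -- g₁ (bar y) ≤ y last
  have hge : g₁ j (bar y) ≤ y (Fin.last n) := by
    by_contra hlt
    push_neg at hlt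
    have hmem : y ∈ {x | bar x ∈ A.W j ∧ A.a j (Fin.last n) < x (Fin.last n) ∧
        x (Fin.last n) < g₁ j (bar x)} := by
      refine ⟨hbarW, ?_, hlt⟩
      have := (hmargin (Fin.last n)).1
      have := A.ρpos
      linarith
    rw [← hrep₁ j] at hmem
    obtain ⟨x', hx', hrx'⟩ := hmem
    have hxx : x' = x := (A.r j).injective (hrx'.trans hy)
    rw [hxx] at hx'
    exact hx.2 (hΩ₁o.interior_eq.symm ▸ hx'.1)
  have hEq : y (Fin.last n) = g₁ j (bar y) := le_antisymm hle hge
  -- the chart index is active for Ω₂'s bounds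
  have hjs : (j : ℕ) < A.s' := (hs₁ j).mpr ⟨x, hxV, hx⟩
  obtain ⟨hc₂low, hc₂high⟩ := hb₂ j hjs (bar y) hbarWc
  set c₂ := g₂ j (bar y) with hc₂
  set w : EuclideanSpace ℝ (Fin (n+1)) := WithLp.toLp 2 (Function.update y.ofLp (Fin.last n) c₂) with hw
  have hwlast : w (Fin.last n) = c₂ := Function.update_self _ _ _
  have hbarw : bar w = bar y := bar_update_last y c₂
  have hwQ : ∀ i, A.a j i < w i ∧ w i < A.b j i := by
    intro i
    induction i using Fin.lastCases with
    | last =>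
      rw [hwlast]
      have := A.ρpos
      exact ⟨by linarith, by linarith⟩
    | cast i =>
      rw [hw, PiLp.toLp_apply, Function.update_of_ne (Fin.castSucc_lt_last i).ne]
      exact hyQ i.castSucc
  set z := (A.r j).symm w with hz
  have hrz : A.r j z = w := (A.r j).apply_symm_apply w
  have hzV : z ∈ A.V j := by
    show A.r j z ∈ {v : EuclideanSpace ℝ (Fin (n+1)) | ∀ i, A.a j i < v i ∧ v i < A.b j i}
    rw [hrz]
    exact hwQ
  have hznot : z ∉ Ω₂ := by
    intro hzin
    have hmem : w ∈ (A.r j) '' (Ω₂ ∩ A.V j) := ⟨z, ⟨hzin, hzV⟩, hrz⟩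
    rw [hrep₂ j] at hmem
    have hlt := hmem.2.2
    rw [hbarw, hwlast, ← hc₂] at hlt
    exact lt_irrefl _ hlt
  have hzcl : z ∈ closure Ω₂ := by
    rw [Metric.mem_closure_iff]
    intro ε hε
    set t := min (ε/2) (A.ρ/2) with ht
    have hρ := A.ρpos
    have htpos : 0 < t := lt_min (by linarith) (by linarith)
    have htρ : t < A.ρ := lt_of_le_of_lt (min_le_right _ _) (by linarith)
    set wt : EuclideanSpace ℝ (Fin (n+1)) := WithLp.toLp 2 (Function.update y.ofLp (Fin.last n) (c₂ - t)) with hwt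
    have hwtmem : wt ∈ {x | bar x ∈ A.W j ∧ A.a j (Fin.last n) < x (Fin.last n) ∧
        x (Fin.last n) < g₂ j (bar x)} := by
      refine ⟨?_, ?_, ?_⟩
      · rw [hwt, bar_update_last]; exact hbarW
      · rw [hwt, PiLp.toLp_apply, Function.update_self]; linarith
      · rw [hwt, PiLp.toLp_apply, Function.update_self, bar_update_last, ← hc₂]; linarith
    rw [← hrep₂ j] at hwtmem
    obtain ⟨x₂, hx₂, hrx₂⟩ := hwtmem
    refine ⟨x₂, hx₂.1, ?_⟩
    have hd1 : dist z x₂ = dist w wt := by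
      rw [← (A.r j).dist_map, hrz, hrx₂]
    have hd2 : dist w wt = t := by
      have heq : wt = WithLp.toLp 2 (Function.update w.ofLp (Fin.last n) (c₂ - t)) := by
        rw [hw, hwt]; simp
      rw [heq, euclid_dist_update, hwlast, show c₂ - (c₂ - t) = t by ring, abs_of_pos htpos]
    rw [hd1, hd2]
    exact lt_of_le_of_lt (min_le_left _ _) (by linarith)
  have hzfr : z ∈ frontier Ω₂ := by
    rw [hΩ₂o.frontier_eq]
    exact ⟨hzcl, hznot⟩
  have hdist : dist x z = |g₁ j (bar y) - c₂| := by
    rw [← (A.r j).dist_map, ← hy, hrz, hw, euclid_dist_update, hEq]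
  calc infDist x (frontier Ω₂) ≤ dist x z := infDist_le_dist_of_mem hzfr
    _ = |g₁ j (bar y) - g₂ j (bar y)| := hdist
    _ ≤ A.adist g₁ g₂ := le_adist A g₁ g₂ hg₁c hg₂c j hbarWc

end Main
/-- For `Ω₁, Ω₂ ∈ C(𝒜)`: the lower Hausdorff–Pompeiu deviation of the boundaries
is at most the Hausdorff–Pompeiu distance of the boundaries, which in turn is at
most the atlas distance `d_𝒜(Ω₁,Ω₂)`. -/
theorem hp_le_atlasDist {n : ℕ} (A : Atlas n)
    (Ω₁ Ω₂ : Set (EuclideanSpace ℝ (Fin (n+1))))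
    (g₁ g₂ : Fin A.s → EuclideanSpace ℝ (Fin n) → ℝ)
    (h₁ : A.IsRep Ω₁ g₁) (h₂ : A.IsRep Ω₂ g₂) :
    min (⨆ x : frontier Ω₁, infDist (x : EuclideanSpace ℝ (Fin (n+1))) (frontier Ω₂))
        (⨆ x : frontier Ω₂, infDist (x : EuclideanSpace ℝ (Fin (n+1))) (frontier Ω₁)) ≤
      max (⨆ x : frontier Ω₁, infDist (x : EuclideanSpace ℝ (Fin (n+1))) (frontier Ω₂))
        (⨆ x : frontier Ω₂, infDist (x : EuclideanSpace ℝ (Fin (n+1))) (frontier Ω₁)) ∧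
    max (⨆ x : frontier Ω₁, infDist (x : EuclideanSpace ℝ (Fin (n+1))) (frontier Ω₂))
        (⨆ x : frontier Ω₂, infDist (x : EuclideanSpace ℝ (Fin (n+1))) (frontier Ω₁)) ≤
      A.adist g₁ g₂ := by
  refine ⟨min_le_max, max_le ?_ ?_⟩
  · exact Real.iSup_le (fun x => infDist_frontier_le A h₁ h₂ x.2) (adist_nonneg A g₁ g₂)
  · refine Real.iSup_le (fun x => ?_) (adist_nonneg A g₁ g₂)
    rw [adist_comm]
    exact infDist_frontier_le A h₂ h₁ x.2
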